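/- Let H be a separable infinite-dimensional complex Hilbert space. Every bounded operator T on H is the limit, in the strong-* topology, of a sequence of complex symmetric operators. Consequently, the closures of the set of complex symmetric operators in the strong-* topology, the strong operator topology, and the weak operator topology all equal B(H). -/
import Mathlib


open Filter Topology ContinuousLinearMap

def IsConjugation {H : Type*} [NormedAddCommGroup H] [InnerProductSpace ℂ H]
    (C : H → H) : Prop :=
  (∀ x y, C (x + y) = C x + C y) ∧
  (∀ (a : ℂ) (x : H), C (a • x) = (starRingEnd ℂ a) • C x) ∧
  (∀ x, ‖C x‖ = ‖x‖) ∧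
  (∀ x, C (C x) = x)

/-- `T` is a complex symmetric operator: `T = C T* C` for some conjugation `C`. -/
def IsCSO {H : Type*} [NormedAddCommGroup H] [InnerProductSpace ℂ H]
    [CompleteSpace H] (T : H →L[ℂ] H) : Prop :=
  ∃ C : H → H, IsConjugation C ∧ ∀ x, T x = C (adjoint T (C x))

section CSOAuxiliary

open Finset
open scoped ENNReal

noncomputable section

local notation "⟪" x ", " y "⟫" => @inner ℂ _ _ x y

variable {H : Type*} [NormedAddCommGroup H] [InnerProductSpace ℂ H] [CompleteSpace H]

theorem exists_hb [TopologicalSpace.SeparableSpace H] (hinf : ¬ FiniteDimensional ℂ H) :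
    Nonempty (HilbertBasis ℕ ℂ H) := by
  classical
  obtain ⟨w, b, hb⟩ := exists_hilbertBasis ℂ H
  obtain ⟨s, hsc, hsd⟩ := TopologicalSpace.exists_countable_dense H
  have horth : Orthonormal ℂ ((↑) : w → H) := hb ▸ b.orthonormal
  have hcw : w.Countable := by
    have hch : ∀ x : w, ∃ y : s, dist (x : H) (y : H) < 1/2 := by
      intro x
      obtain ⟨y, hy, hxy⟩ := Metric.mem_closure_iff.1 (hsd (x : H)) (1/2) (by norm_num)
      exact ⟨⟨y, hy⟩, hxy⟩
    choose f hf using hch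
    have hinj : Function.Injective f := by
      intro x x' hxx'
      by_contra hne
      have h2 : ‖(x : H) - (x' : H)‖ ^ 2 = 2 := by
        have horth' := horth
        rw [orthonormal_iff_ite] at horth'
        have h11 := horth' x x
        have h22 := horth' x' x'
        have h12 := horth' x x'
        rw [if_pos rfl] at h11
        rw [if_pos rfl] at h22
        rw [if_neg hne] at h12
        have h21 : ⟪(x' : H), (x : H)⟫ = 0 := by
          rw [← inner_conj_symm, h12, map_zero]
        have expand : ⟪(x : H) - (x' : H), (x : H) - (x' : H)⟫ = (2 : ℂ) := by
          simp only [inner_sub_left, inner_sub_right, h11, h22, h12, h21]; ring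
        have hn := inner_self_eq_norm_sq_to_K (𝕜 := ℂ) ((x : H) - (x' : H))
        rw [expand] at hn
        exact Complex.ofReal_inj.mp (by push_cast; exact hn.symm)
      have hlt : dist (x : H) (x' : H) < 1 := by
        calc dist (x : H) (x' : H) ≤ dist (x : H) (f x : H) + dist (f x : H) (x' : H) :=
              dist_triangle _ _ _
          _ < 1/2 + 1/2 := add_lt_add (hf x) (by rw [hxx', dist_comm]; exact hf x')
          _ = 1 := by norm_num
      rw [dist_eq_norm] at hlt
      nlinarith [norm_nonneg ((x : H) - (x' : H))]
    have : Countable s := hsc.to_subtype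
    have : Countable w := Function.Injective.countable hinj
    exact Set.countable_coe_iff.mp this
  have hwi : w.Infinite := by
    by_contra hfin
    rw [Set.not_infinite] at hfin
    apply hinf
    have hd := b.dense_span
    have hrange : Set.range ⇑b = w := by rw [hb, Subtype.range_coe]
    rw [hrange] at hd
    have hfd : FiniteDimensional ℂ (Submodule.span ℂ w) := FiniteDimensional.span_of_finite ℂ hfin
    have hclosed : (Submodule.span ℂ w).topologicalClosure = Submodule.span ℂ w :=
      IsClosed.submodule_topologicalClosure_eq (Submodule.closed_of_finiteDimensional _)
    rw [hclosed] at hd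
    rw [hd] at hfd
    exact hfd.of_injective (Submodule.topEquiv : (⊤ : Submodule ℂ H) ≃ₗ[ℂ] H).symm.toLinearMap
      (LinearEquiv.injective _)
  -- build an ℕ-indexed basis
  have : Countable w := hcw.to_subtype
  have : Infinite w := hwi.to_subtype
  have : Encodable w := hcw.toEncodable
  have : Denumerable w := Denumerable.ofEncodableOfInfinite w
  let e : ℕ ≃ w := (Denumerable.eqv w).symm
  have hv : Orthonormal ℂ (fun n => ((e n : w) : H)) := horth.comp e e.injective
  have hrange2 : Set.range (fun n => ((e n : w) : H)) = w := by
    have : Set.range (fun n => ((e n : w) : H)) = Set.range ((↑) : w → H) :=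
      e.surjective.range_comp _
    rw [this, Subtype.range_coe]
  have hsp : ⊤ ≤ (Submodule.span ℂ (Set.range (fun n => ((e n : w) : H)))).topologicalClosure := by
    have hd := b.dense_span
    have hrange : Set.range ⇑b = w := by rw [hb, Subtype.range_coe]
    rw [hrange] at hd
    rw [hrange2, hd]
  exact ⟨HilbertBasis.mk hv hsp⟩


variable (b : HilbertBasis ℕ ℂ H)


def rk (i j : ℕ) : H →L[ℂ] H := (innerSL ℂ (b j)).smulRight (b i)

lemma rk_apply (i j : ℕ) (x : H) : rk b i j x = ⟪b j, x⟫ • b i := rfl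

lemma adjoint_rk (i j : ℕ) : adjoint (rk b i j) = rk b j i := by
  symm
  apply (ContinuousLinearMap.eq_adjoint_iff _ _).mpr
  intro x y
  simp only [rk_apply, inner_smul_left, inner_smul_right, ← inner_conj_symm x (b i)]
  ring

def sw (n k : ℕ) : ℕ := if k < n then k + n else if k < 2*n then k - n else k

lemma sw_invol (n : ℕ) : Function.Involutive (sw n) := by
  intro k; unfold sw; split_ifs <;> omega

lemma sw_lt {n i : ℕ} (h : i < n) : sw n i = i + n := by unfold sw; split_ifs <;> omega

lemma sw_mid {n i : ℕ} (h : i < n) : sw n (n + i) = i := by unfold sw; split_ifs <;> omega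

lemma sw_big {n k : ℕ} (h : 2*n ≤ k) : sw n k = k := by unfold sw; split_ifs <;> omega

def conjSeq (σ : ℕ → ℕ) (hσ : Function.Involutive σ) (x : H) : lp (fun _ : ℕ => ℂ) 2 :=
  ⟨fun i => star (b.repr x (σ i)), by
    apply memℓp_gen
    have h2 : (0:ℝ) < (2:ℝ≥0∞).toReal := by norm_num
    have hs := ((b.repr x).property.summable h2)
    simp only [norm_star]
    exact ((hσ.toPerm σ).summable_iff
      (f := fun i => ‖b.repr x i‖ ^ (2:ℝ≥0∞).toReal)).mpr hs⟩

lemma conjSeq_apply (σ : ℕ → ℕ) (hσ : Function.Involutive σ) (x : H) (i : ℕ) :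
    conjSeq b σ hσ x i = star (b.repr x (σ i)) := rfl

def conjMap (σ : ℕ → ℕ) (hσ : Function.Involutive σ) (x : H) : H :=
  b.repr.symm (conjSeq b σ hσ x)

lemma repr_conjMap (σ : ℕ → ℕ) (hσ : Function.Involutive σ) (x : H) (i : ℕ) :
    b.repr (conjMap b σ hσ x) i = star (b.repr x (σ i)) := by
  simp only [conjMap, LinearIsometryEquiv.apply_symm_apply]
  rfl

lemma inner_conjMap (σ : ℕ → ℕ) (hσ : Function.Involutive σ) (x : H) (i : ℕ) :
    ⟪b i, conjMap b σ hσ x⟫ = star ⟪b (σ i), x⟫ := by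
  rw [← b.repr_apply_apply, repr_conjMap, b.repr_apply_apply]

lemma ext_coords {x y : H} (h : ∀ i, ⟪b i, x⟫ = ⟪b i, y⟫) : x = y := by
  apply b.repr.injective
  apply lp.ext
  funext i
  rw [b.repr_apply_apply, b.repr_apply_apply]
  exact h i

lemma isConjugation_conjMap (σ : ℕ → ℕ) (hσ : Function.Involutive σ) :
    IsConjugation (conjMap b σ hσ) := by
  refine ⟨?_, ?_, ?_, ?_⟩
  · intro x y
    apply ext_coords b
    intro i
    rw [inner_add_right, inner_conjMap, inner_conjMap, inner_conjMap, inner_add_right, star_add]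
  · intro a x
    apply ext_coords b
    intro i
    rw [inner_smul_right, inner_conjMap, inner_conjMap, inner_smul_right, star_mul']
    rfl
  · intro x
    have h2 : (0:ℝ) < (2:ℝ≥0∞).toReal := by norm_num
    rw [show conjMap b σ hσ x = b.repr.symm (conjSeq b σ hσ x) from rfl,
      LinearIsometryEquiv.norm_map]
    rw [← b.repr.norm_map x]
    rw [lp.norm_eq_tsum_rpow h2, lp.norm_eq_tsum_rpow h2]
    congr 1
    calc ∑' i, ‖conjSeq b σ hσ x i‖ ^ (2:ℝ≥0∞).toReal
        = ∑' i, ‖b.repr x (σ i)‖ ^ (2:ℝ≥0∞).toReal := by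
          congr 1; funext i; rw [conjSeq_apply, norm_star]
      _ = ∑' i, ‖b.repr x i‖ ^ (2:ℝ≥0∞).toReal :=
          (hσ.toPerm σ).tsum_eq (f := fun i => ‖b.repr x i‖ ^ (2:ℝ≥0∞).toReal)
  · intro x
    apply ext_coords b
    intro i
    rw [inner_conjMap, inner_conjMap, star_star, hσ i]


section ops
variable (S : H →L[ℂ] H) (n : ℕ)

def Dop : H →L[ℂ] H :=
  ∑ i ∈ range n, ∑ j ∈ range n, ⟪b i, S (b j)⟫ • rk b i j

def Gop : H →L[ℂ] H :=
  ∑ i ∈ range n, ∑ j ∈ range n, ⟪b j, S (b i)⟫ • rk b (n+i) (n+j)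

lemma inner_Dop (z : H) (m : ℕ) : ⟪b m, Dop b S n z⟫ =
    if m < n then ∑ j ∈ range n, ⟪b m, S (b j)⟫ * ⟪b j, z⟫ else 0 := by
  have hb := b.orthonormal
  rw [orthonormal_iff_ite] at hb
  simp only [Dop, ContinuousLinearMap.sum_apply, ContinuousLinearMap.smul_apply, rk_apply,
    inner_sum, inner_smul_right, hb, mul_ite, mul_one, mul_zero]
  rw [Finset.sum_comm]
  by_cases hm : m < n
  · rw [if_pos hm]
    apply Finset.sum_congr rfl
    intro j _
    rw [Finset.sum_ite_eq (range n) m]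
    rw [if_pos (Finset.mem_range.mpr hm)]
  · rw [if_neg hm]
    apply Finset.sum_eq_zero
    intro j _
    rw [Finset.sum_ite_eq (range n) m]
    rw [if_neg (fun h => hm (Finset.mem_range.mp h))]

lemma inner_Gop_lo (z : H) (m : ℕ) (hm : m < n) : ⟪b m, Gop b S n z⟫ = 0 := by
  have hb := b.orthonormal
  rw [orthonormal_iff_ite] at hb
  simp only [Gop, ContinuousLinearMap.sum_apply, ContinuousLinearMap.smul_apply, rk_apply,
    inner_sum, inner_smul_right, hb, mul_ite, mul_one, mul_zero]
  apply Finset.sum_eq_zero; intro i hi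
  apply Finset.sum_eq_zero; intro j hj
  rw [if_neg (by omega)]

lemma inner_Gop_hi (z : H) (m : ℕ) (hm : 2*n ≤ m) : ⟪b m, Gop b S n z⟫ = 0 := by
  have hb := b.orthonormal
  rw [orthonormal_iff_ite] at hb
  simp only [Gop, ContinuousLinearMap.sum_apply, ContinuousLinearMap.smul_apply, rk_apply,
    inner_sum, inner_smul_right, hb, mul_ite, mul_one, mul_zero]
  apply Finset.sum_eq_zero; intro i hi
  apply Finset.sum_eq_zero; intro j hj
  rw [if_neg (by rw [Finset.mem_range] at hi; omega)]

lemma inner_Gop_mid (z : H) (k : ℕ) (hk : k < n) : ⟪b (n+k), Gop b S n z⟫ =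
    ∑ j ∈ range n, ⟪b j, S (b k)⟫ * ⟪b (n+j), z⟫ := by
  have hb := b.orthonormal
  rw [orthonormal_iff_ite] at hb
  simp only [Gop, ContinuousLinearMap.sum_apply, ContinuousLinearMap.smul_apply, rk_apply,
    inner_sum, inner_smul_right, hb, mul_ite, mul_one, mul_zero]
  rw [Finset.sum_comm]
  apply Finset.sum_congr rfl
  intro j _
  have : ∀ i, (n + k = n + i) = (k = i) := fun i => by
    simp [Nat.add_right_cancel_iff, add_right_inj]
  simp only [this]
  rw [Finset.sum_ite_eq (range n) k]
  rw [if_pos (Finset.mem_range.mpr hk)]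

lemma adjoint_Dop : adjoint (Dop b S n) = Dop b (adjoint S) n := by
  have hc : ∀ i j : ℕ, (starRingEnd ℂ) ⟪b i, S (b j)⟫ = ⟪b j, adjoint S (b i)⟫ := by
    intro i j
    rw [inner_conj_symm, ContinuousLinearMap.adjoint_inner_right]
  unfold Dop
  rw [map_sum]
  rw [Finset.sum_comm]
  apply Finset.sum_congr rfl
  intro j _
  rw [map_sum]
  apply Finset.sum_congr rfl
  intro i _
  rw [LinearIsometryEquiv.map_smulₛₗ, adjoint_rk, hc]

lemma adjoint_Gop : adjoint (Gop b S n) = Gop b (adjoint S) n := by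
  have hc : ∀ i j : ℕ, (starRingEnd ℂ) ⟪b j, S (b i)⟫ = ⟪b i, adjoint S (b j)⟫ := by
    intro i j
    rw [inner_conj_symm, ContinuousLinearMap.adjoint_inner_right]
  unfold Gop
  rw [map_sum]
  rw [Finset.sum_comm]
  apply Finset.sum_congr rfl
  intro j _
  rw [map_sum]
  apply Finset.sum_congr rfl
  intro i _
  rw [LinearIsometryEquiv.map_smulₛₗ, adjoint_rk, hc]

end ops

lemma isCSO_approx (T : H →L[ℂ] H) (n : ℕ) : IsCSO (Dop b T n + Gop b T n) := by
  refine ⟨conjMap b (sw n) (sw_invol n), isConjugation_conjMap b _ _, ?_⟩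
  intro x
  have hadj : adjoint (Dop b T n + Gop b T n)
      = Dop b (adjoint T) n + Gop b (adjoint T) n := by
    rw [map_add, adjoint_Dop, adjoint_Gop]
  rw [hadj]
  apply ext_coords b
  intro m
  rw [inner_conjMap]
  set y := conjMap b (sw n) (sw_invol n) x with hy
  have hyc : ∀ i, ⟪b i, y⟫ = star ⟪b (sw n i), x⟫ := fun i => inner_conjMap b _ _ x i
  have hTd : ∀ i j : ℕ, ⟪b i, adjoint T (b j)⟫ = star ⟪b j, T (b i)⟫ := by
    intro i j
    rw [ContinuousLinearMap.adjoint_inner_right, ← inner_conj_symm, starRingEnd_apply]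
  simp only [ContinuousLinearMap.add_apply]
  rcases lt_or_ge m n with hm | hm
  · -- m < n
    rw [sw_lt hm]
    rw [inner_add_right, inner_add_right, inner_Dop, inner_Gop_lo b T n x m hm, if_pos hm,
      add_zero]

    have h1 : ¬ (m + n < n) := by omega
    rw [show m + n = n + m by omega] at *
    rw [inner_Dop, if_neg (by omega), zero_add, inner_Gop_mid b _ n y m hm]
    rw [star_sum]
    apply Finset.sum_congr rfl
    intro j hj
    rw [Finset.mem_range] at hj
    rw [hyc (n+j), sw_mid hj, hTd j m, star_mul', star_star, star_star]
  · rcases lt_or_ge m (2*n) with hm2 | hm2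
    · -- n ≤ m < 2n
      obtain ⟨k, rfl⟩ : ∃ k, m = n + k := ⟨m - n, by omega⟩
      have hk : k < n := by omega
      rw [sw_mid hk]
      rw [inner_add_right, inner_add_right, inner_Dop, if_neg (by omega), zero_add,
        inner_Gop_mid b T n x k hk]
      rw [inner_Dop, if_pos hk, inner_Gop_lo b _ n y k hk, add_zero, star_sum]
      apply Finset.sum_congr rfl
      intro j hj
      rw [Finset.mem_range] at hj
      rw [hyc j, sw_lt hj, hTd k j, star_mul', star_star, star_star, add_comm j n]
    · -- 2n ≤ m
      rw [sw_big hm2]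
      rw [inner_add_right, inner_add_right, inner_Dop, if_neg (by omega),
        inner_Gop_hi b T n x m hm2, add_zero,
        inner_Dop, if_neg (by omega), inner_Gop_hi b _ n y m hm2, add_zero, star_zero]


lemma two_toReal : ((2:ℝ≥0∞)).toReal = 2 := by norm_num

lemma rpow_two_eq (y : ℝ) : y ^ (2:ℝ≥0∞).toReal = y ^ 2 := by
  rw [two_toReal]
  rw [show (2:ℝ) = ((2:ℕ):ℝ) by norm_num, Real.rpow_natCast]

lemma norm_sq_sum (s : Finset ℕ) (v : ℕ → ℕ) (hv : Function.Injective v) (c : ℕ → ℂ) :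
    ‖∑ i ∈ s, c i • b (v i)‖ ^ 2 = ∑ i ∈ s, ‖c i‖ ^ 2 := by
  have horth : Orthonormal ℂ (fun i => b (v i)) := b.orthonormal.comp v hv
  have h := horth.inner_sum c c s
  have h2 : RCLike.re ⟪∑ i ∈ s, c i • b (v i), ∑ i ∈ s, c i • b (v i)⟫
      = ‖∑ i ∈ s, c i • b (v i)‖ ^ 2 := inner_self_eq_norm_sq _
  rw [h] at h2
  rw [← h2, map_sum]
  exact Finset.sum_congr rfl fun i _ => by rw [RCLike.conj_mul]; rw [← RCLike.ofReal_pow, RCLike.ofReal_re]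

lemma bessel (s : Finset ℕ) (z : H) : ∑ i ∈ s, ‖⟪b i, z⟫‖ ^ 2 ≤ ‖z‖ ^ 2 := by
  have h2 : (0:ℝ) < (2:ℝ≥0∞).toReal := by norm_num
  have h := lp.sum_rpow_le_norm_rpow h2 (b.repr z) s
  simp only [rpow_two_eq] at h
  rw [b.repr.norm_map z] at h
  convert h using 2 with i
  rw [b.repr_apply_apply]

def Pn (n : ℕ) (x : H) : H := ∑ i ∈ range n, ⟪b i, x⟫ • b i

lemma inner_Pn (n : ℕ) (z : H) (m : ℕ) :
    ⟪b m, Pn b n z⟫ = if m < n then ⟪b m, z⟫ else 0 := by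
  have hb := b.orthonormal
  rw [orthonormal_iff_ite] at hb
  simp only [Pn, inner_sum, inner_smul_right, hb, mul_ite, mul_one, mul_zero]
  rw [Finset.sum_ite_eq (range n) m]
  simp [Finset.mem_range]

lemma Dop_eq_Pn (S : H →L[ℂ] H) (n : ℕ) (x : H) :
    Dop b S n x = Pn b n (S (Pn b n x)) := by
  apply ext_coords b
  intro m
  rw [inner_Dop, inner_Pn]
  by_cases hm : m < n
  · rw [if_pos hm, if_pos hm]
    rw [show S (Pn b n x) = ∑ j ∈ range n, ⟪b j, x⟫ • S (b j) by
      rw [Pn, map_sum]; exact Finset.sum_congr rfl fun j _ => S.map_smul _ _]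
    rw [inner_sum]
    exact Finset.sum_congr rfl fun j _ => by rw [inner_smul_right]; ring
  · rw [if_neg hm, if_neg hm]

lemma Pn_sub (n : ℕ) (u v : H) : Pn b n (u - v) = Pn b n u - Pn b n v := by
  simp only [Pn, inner_sub_right, sub_smul, Finset.sum_sub_distrib]

lemma norm_Pn_le (n : ℕ) (z : H) : ‖Pn b n z‖ ≤ ‖z‖ := by
  have h1 : ‖Pn b n z‖ ^ 2 = ∑ i ∈ range n, ‖⟪b i, z⟫‖ ^ 2 :=
    norm_sq_sum b (range n) id (fun _ _ h => h) _
  have h2 := bessel b (range n) z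
  nlinarith [norm_nonneg (Pn b n z), norm_nonneg z]

lemma tendsto_Pn (x : H) : Tendsto (fun n => Pn b n x) atTop (𝓝 x) := by
  have h := (b.hasSum_repr x).tendsto_sum_nat
  have : ∀ n, Pn b n x = ∑ i ∈ range n, b.repr x i • b i := by
    intro n
    exact Finset.sum_congr rfl fun i _ => by rw [b.repr_apply_apply]
  simpa [this] using h

lemma tendsto_Pn_seq {y : ℕ → H} {L : H} (hy : Tendsto y atTop (𝓝 L)) :
    Tendsto (fun n => Pn b n (y n)) atTop (𝓝 L) := by
  rw [tendsto_iff_norm_sub_tendsto_zero]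
  have hbound : ∀ n, ‖Pn b n (y n) - L‖ ≤ ‖y n - L‖ + ‖Pn b n L - L‖ := by
    intro n
    calc ‖Pn b n (y n) - L‖ = ‖Pn b n (y n - L) + (Pn b n L - L)‖ := by
          rw [Pn_sub]; congr 1; abel
      _ ≤ ‖Pn b n (y n - L)‖ + ‖Pn b n L - L‖ := norm_add_le _ _
      _ ≤ ‖y n - L‖ + ‖Pn b n L - L‖ := by
          have := norm_Pn_le b n (y n - L); linarith
  have h1 : Tendsto (fun n => ‖y n - L‖) atTop (𝓝 0) :=
    (tendsto_iff_norm_sub_tendsto_zero).mp hy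
  have h2 : Tendsto (fun n => ‖Pn b n L - L‖) atTop (𝓝 0) :=
    (tendsto_iff_norm_sub_tendsto_zero).mp (tendsto_Pn b L)
  have hsum : Tendsto (fun n => ‖y n - L‖ + ‖Pn b n L - L‖) atTop (𝓝 0) := by
    simpa using h1.add h2
  exact squeeze_zero (fun n => norm_nonneg _) hbound hsum

lemma tendsto_Dop (S : H →L[ℂ] H) (x : H) :
    Tendsto (fun n => Dop b S n x) atTop (𝓝 (S x)) := by
  simp only [Dop_eq_Pn]
  apply tendsto_Pn_seq b
  exact (S.continuous.tendsto (x)).comp (tendsto_Pn b x)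

def rvec (n : ℕ) (x : H) : H := ∑ j ∈ range n, star ⟪b (n+j), x⟫ • b j

lemma Gop_eq (T : H →L[ℂ] H) (n : ℕ) (x : H) :
    Gop b T n x = ∑ i ∈ range n, ⟪adjoint T (rvec b n x), b i⟫ • b (n+i) := by
  simp only [Gop, ContinuousLinearMap.sum_apply, ContinuousLinearMap.smul_apply, rk_apply,
    smul_smul]
  apply Finset.sum_congr rfl
  intro i _
  rw [← Finset.sum_smul]
  congr 1
  rw [ContinuousLinearMap.adjoint_inner_left]
  rw [rvec, sum_inner]
  exact Finset.sum_congr rfl fun j _ => by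
    rw [inner_smul_left, starRingEnd_apply, star_star]; ring

lemma norm_Gop_le (T : H →L[ℂ] H) (n : ℕ) (x : H) :
    ‖Gop b T n x‖ ≤ ‖adjoint T‖ * ‖rvec b n x‖ := by
  have h1 : ‖Gop b T n x‖ ^ 2 = ∑ i ∈ range n, ‖⟪adjoint T (rvec b n x), b i⟫‖ ^ 2 := by
    rw [Gop_eq]
    exact norm_sq_sum b (range n) (fun i => n + i) (fun p q h => by simpa using h) _
  have h2 : ∑ i ∈ range n, ‖⟪adjoint T (rvec b n x), b i⟫‖ ^ 2 ≤ ‖adjoint T (rvec b n x)‖ ^ 2 := by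
    have := bessel b (range n) (adjoint T (rvec b n x))
    convert this using 2 with i
    rw [← inner_conj_symm, RCLike.norm_conj]
  have h3 : ‖adjoint T (rvec b n x)‖ ≤ ‖adjoint T‖ * ‖rvec b n x‖ :=
    (adjoint T).le_opNorm _
  have h4 : (0:ℝ) ≤ ‖adjoint T‖ * ‖rvec b n x‖ :=
    mul_nonneg (norm_nonneg _) (norm_nonneg _)
  nlinarith [norm_nonneg (Gop b T n x), norm_nonneg (adjoint T (rvec b n x))]

lemma tendsto_rvec (x : H) : Tendsto (fun n => ‖rvec b n x‖) atTop (𝓝 0) := by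
  have h2 : (0:ℝ) < (2:ℝ≥0∞).toReal := by norm_num
  set F : ℕ → ℝ := fun k => ‖b.repr x k‖ ^ 2 with hF
  have hFnn : ∀ k, 0 ≤ F k := fun k => sq_nonneg _
  have hsumm : Summable F := by
    have := (b.repr x).property.summable h2
    simpa [hF, rpow_two_eq] using this
  have hnorm : ∀ n, ‖rvec b n x‖ ^ 2 = ∑ j ∈ range n, F (n + j) := by
    intro n
    have h0 : ‖rvec b n x‖ ^ 2 = ∑ j ∈ range n, ‖star ⟪b (n+j), x⟫‖ ^ 2 :=
      norm_sq_sum b (range n) id (fun _ _ h => h) _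
    rw [h0]
    exact Finset.sum_congr rfl fun j _ => by
      rw [norm_star, ← b.repr_apply_apply]
  have hS := hsumm.hasSum.tendsto_sum_nat
  set S : ℕ → ℝ := fun n => ∑ k ∈ range n, F k with hSdef
  have hdiff : ∀ n, ∑ j ∈ range n, F (n + j) = S (2*n) - S n := by
    intro n
    have hnn : 2*n - n = n := by omega
    have : ∑ j ∈ range n, F (n + j) = ∑ k ∈ Finset.Ico n (2*n), F k := by
      rw [Finset.sum_Ico_eq_sum_range, hnn]
    rw [this, Finset.sum_Ico_eq_sub _ (by omega)]
  have h2n : Tendsto (fun n => S (2*n)) atTop (𝓝 (∑' k, F k)) :=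
    hS.comp (tendsto_atTop_mono (fun n => by simp only [id_eq]; omega) tendsto_id)
  have hsq : Tendsto (fun n => ‖rvec b n x‖ ^ 2) atTop (𝓝 0) := by
    have := h2n.sub hS
    simp only [sub_self] at this
    apply Tendsto.congr (fun n => (by rw [hnorm n, hdiff n]))
    exact this
  have : Tendsto (fun n => Real.sqrt (‖rvec b n x‖ ^ 2)) atTop (𝓝 0) := by
    have := (Real.continuous_sqrt.tendsto 0).comp hsq
    simpa [Function.comp_def] using this
  apply this.congr
  intro n
  rw [Real.sqrt_sq (norm_nonneg _)]

lemma tendsto_Gop (T : H →L[ℂ] H) (x : H) :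
    Tendsto (fun n => Gop b T n x) atTop (𝓝 0) := by
  refine squeeze_zero_norm (fun n => norm_Gop_le b T n x) ?_
  simpa using (tendsto_rvec b x).const_mul ‖adjoint T‖

theorem main (T : H →L[ℂ] H) (b : HilbertBasis ℕ ℂ H) :
    ∃ Tseq : ℕ → (H →L[ℂ] H), (∀ n, IsCSO (Tseq n)) ∧
      (∀ x : H, Tendsto (fun n => Tseq n x) atTop (𝓝 (T x))) ∧
      (∀ x : H, Tendsto (fun n => adjoint (Tseq n) x) atTop (𝓝 (adjoint T x))) := by
  refine ⟨fun n => Dop b T n + Gop b T n, fun n => isCSO_approx b T n, ?_, ?_⟩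
  · intro x
    have := (tendsto_Dop b T x).add (tendsto_Gop b T x)
    simpa using this
  · intro x
    have heq : ∀ n, adjoint (Dop b T n + Gop b T n) x
        = Dop b (adjoint T) n x + Gop b (adjoint T) n x := by
      intro n
      rw [map_add, adjoint_Dop, adjoint_Gop, ContinuousLinearMap.add_apply]
    have := (tendsto_Dop b (adjoint T) x).add (tendsto_Gop b (adjoint T) x)
    rw [show (𝓝 (adjoint T x + 0)) = 𝓝 (adjoint T x) by rw [add_zero]] at this
    exact Tendsto.congr (fun n => (heq n).symm) this

end

end CSOAuxiliary

/-- On a separable infinite-dimensional complex Hilbert space, every bounded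
operator is the strong-* limit of a sequence of complex symmetric operators.
(Hence the strong-*, SOT and WOT closures of the complex symmetric operators
are all of `B(H)`.) -/
theorem CSO_strongStar_dense {H : Type*} [NormedAddCommGroup H]
    [InnerProductSpace ℂ H] [CompleteSpace H]
    [TopologicalSpace.SeparableSpace H] (hinf : ¬ FiniteDimensional ℂ H)
    (T : H →L[ℂ] H) :
    ∃ Tseq : ℕ → (H →L[ℂ] H), (∀ n, IsCSO (Tseq n)) ∧
      (∀ x : H, Tendsto (fun n => Tseq n x) atTop (𝓝 (T x))) ∧
      (∀ x : H, Tendsto (fun n => adjoint (Tseq n) x) atTop (𝓝 (adjoint T x))) := by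
  obtain ⟨b⟩ := exists_hb hinf
  exact main T b
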